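/- For every positive integer n and every even integer d ≥ 2, L(S_{n,d}) is a proper subset of LimsupEven_{n,d}: every word accepted by S_{n,d} belongs to LimsupEven_{n,d}, and there exists a word in LimsupEven_{n,d} not accepted by S_{n,d}. -/

import Mathlib

namespace PGSep

/-- Letters of the alphabet `Σ_{n,d}`: triples (source node, priority, target node). -/
abbrev Letter : Type := ℕ × ℕ × ℕ

/-- The priority component of a letter. -/
def prio (e : Letter) : ℕ := e.2.1

/-- Membership in the alphabet `Σ_{n,d} = {1,…,n} × {1,…,d} × {1,…,n}`. -/
def InAlph (n d : ℕ) (e : Letter) : Prop :=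
  1 ≤ e.1 ∧ e.1 ≤ n ∧ 1 ≤ e.2.1 ∧ e.2.1 ≤ d ∧ 1 ≤ e.2.2 ∧ e.2.2 ≤ n

/-- Infinite words over the alphabet. -/
abbrev Word : Type := ℕ → Letter

/-- `p` occurs infinitely often among the values of `f`. -/
def InfOft (f : ℕ → ℕ) (p : ℕ) : Prop := ∀ N, ∃ k, N ≤ k ∧ f k = p

/-- The largest value occurring infinitely often in `f` exists and is even. -/
def MaxInfOftEven (f : ℕ → ℕ) : Prop :=
  ∃ p, Even p ∧ InfOft f p ∧ ∀ q, InfOft f q → q ≤ p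

/-- The largest value occurring infinitely often in `f` exists and is odd. -/
def MaxInfOftOdd (f : ℕ → ℕ) : Prop :=
  ∃ p, Odd p ∧ InfOft f p ∧ ∀ q, InfOft f q → q ≤ p

/-- `LimsupEven_{n,d}`: the largest priority occurring infinitely often is even. -/
def LimsupEven (w : Word) : Prop := MaxInfOftEven fun k => prio (w k)

/-- `LimsupOdd_{n,d}`: the largest priority occurring infinitely often is odd. -/
def LimsupOdd (w : Word) : Prop := MaxInfOftOdd fun k => prio (w k)

/-- An infinite sequence of triples is a path in the edge set `E`. -/
def IsPathSeq {V : Type*} (E : Set (V × ℕ × V)) (w : ℕ → V × ℕ × V) : Prop :=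
  ∀ k, w k ∈ E ∧ (w k).2.2 = (w (k + 1)).1

/-- A game graph with `n` nodes (the set {1,…,n}) and priorities up to `d`. -/
structure GameGraph (n d : ℕ) where
  /-- nodes owned by Even (V_□) -/
  evenN : Set ℕ
  /-- nodes owned by Odd (V_△) -/
  oddN : Set ℕ
  /-- the starting node -/
  start : ℕ
  /-- the set of edges (a subset of the alphabet) -/
  edges : Set Letter
  union_eq : evenN ∪ oddN = Set.Icc 1 n
  disj : Disjoint evenN oddN
  start_mem : start ∈ Set.Icc 1 n
  edges_alph : ∀ e ∈ edges, InAlph n d e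
  total : ∀ v ∈ Set.Icc (1 : ℕ) n, ∃ e ∈ edges, e.1 = v

/-- A play in a game graph: an infinite path starting at the starting node,
identified with the word listing its consecutive edges. -/
def IsPlay {n d : ℕ} (G : GameGraph n d) (w : Word) : Prop :=
  (w 0).1 = G.start ∧ IsPathSeq G.edges w

/-- A positional strategy for Even: one outgoing edge for each node of `V_□`. -/
structure EPosStrat {n d : ℕ} (G : GameGraph n d) where
  choice : ℕ → Letter
  mem : ∀ v ∈ G.evenN, choice v ∈ G.edges ∧ (choice v).1 = v

/-- A positional strategy for Odd: one outgoing edge for each node of `V_△`. -/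
structure OPosStrat {n d : ℕ} (G : GameGraph n d) where
  choice : ℕ → Letter
  mem : ∀ v ∈ G.oddN, choice v ∈ G.edges ∧ (choice v).1 = v

/-- A play arises from a positional strategy of Even. -/
def ArisesE {n d : ℕ} {G : GameGraph n d} (τ : EPosStrat G) (w : Word) : Prop :=
  IsPlay G w ∧ ∀ k, (w k).1 ∈ G.evenN → w k = τ.choice (w k).1

/-- A play arises from a positional strategy of Odd. -/
def ArisesO {n d : ℕ} {G : GameGraph n d} (τ : OPosStrat G) (w : Word) : Prop :=
  IsPlay G w ∧ ∀ k, (w k).1 ∈ G.oddN → w k = τ.choice (w k).1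

/-- A positional strategy for Even is winning: every arising play is won by Even. -/
def EWinningPos {n d : ℕ} {G : GameGraph n d} (τ : EPosStrat G) : Prop :=
  ∀ w, ArisesE τ w → LimsupEven w

/-- A positional strategy for Odd is winning: every arising play is won by Odd
(i.e. not won by Even). -/
def OWinningPos {n d : ℕ} {G : GameGraph n d} (τ : OPosStrat G) : Prop :=
  ∀ w, ArisesO τ w → ¬ LimsupEven w

/-- `PosEven_{n,d}`: plays arising from positional winning strategies for Even. -/
def PosEven (n d : ℕ) : Set Word :=
  {w | ∃ G : GameGraph n d, ∃ τ : EPosStrat G, EWinningPos τ ∧ ArisesE τ w}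

/-- `PosOdd_{n,d}`: plays arising from positional winning strategies for Odd. -/
def PosOdd (n d : ℕ) : Set Word :=
  {w | ∃ G : GameGraph n d, ∃ τ : OPosStrat G, OWinningPos τ ∧ ArisesO τ w}

/-- A nondeterministic automaton reading letters, with state space `Q`. -/
structure Automaton (Q : Type*) where
  init : Q
  trans : Set (Q × Letter × ℕ × Q)

/-- Transitions: (source state, letter, emitted priority, target state). -/
abbrev Trans (Q : Type*) : Type _ := Q × Letter × ℕ × Q

def tSrc {Q : Type*} (t : Trans Q) : Q := t.1
def tLetter {Q : Type*} (t : Trans Q) : Letter := t.2.1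
def tPrio {Q : Type*} (t : Trans Q) : ℕ := t.2.2.1
def tTgt {Q : Type*} (t : Trans Q) : Q := t.2.2.2

/-- `A` is a (total) nondeterministic parity automaton over `Σ_{n,d}` with
transition priorities in `{1,…,d'}`. -/
def IsParityAutomaton (n d d' : ℕ) {Q : Type*} (A : Automaton Q) : Prop :=
  (∀ t ∈ A.trans, InAlph n d (tLetter t) ∧ 1 ≤ tPrio t ∧ tPrio t ≤ d') ∧
  (∀ (s : Q) (e : Letter), InAlph n d e → ∃ p s', (s, e, p, s') ∈ A.trans)

/-- A run of the automaton: an infinite path of transitions starting at `init`. -/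
def IsRun {Q : Type*} (A : Automaton Q) (ρ : ℕ → Trans Q) : Prop :=
  tSrc (ρ 0) = A.init ∧ ∀ k, ρ k ∈ A.trans ∧ tTgt (ρ k) = tSrc (ρ (k + 1))

/-- The run `ρ` reads the word `w`. -/
def Reads {Q : Type*} (ρ : ℕ → Trans Q) (w : Word) : Prop := ∀ k, tLetter (ρ k) = w k

/-- A run is accepting: the largest priority labelling infinitely many
of its transitions is even. -/
def Accepting {Q : Type*} (ρ : ℕ → Trans Q) : Prop := MaxInfOftEven fun k => tPrio (ρ k)

/-- The language of the automaton. -/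
def Lang {Q : Type*} (A : Automaton Q) : Set Word :=
  {w | ∃ ρ, IsRun A ρ ∧ Reads ρ w ∧ Accepting ρ}

/-- A transition strategy for `A`, resolving nondeterminism based on the word read
so far, the current state, and the next letter. -/
structure TransStrat (n d : ℕ) {Q : Type*} (A : Automaton Q) where
  app : List Letter → Q → Letter → Trans Q
  valid : ∀ w s e, InAlph n d e →
    app w s e ∈ A.trans ∧ tSrc (app w s e) = s ∧ tLetter (app w s e) = e

/-- The state reached after reading the first `k` letters of `w` following `σ`. -/
def stateAt {n d : ℕ} {Q : Type*} (A : Automaton Q) (σ : TransStrat n d A) (w : Word) :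
    ℕ → Q
  | 0 => A.init
  | k + 1 => tTgt (σ.app ((List.range k).map w) (stateAt A σ w k) (w k))

/-- The run obtained by following the transition strategy `σ` while reading `w`. -/
def followRun {n d : ℕ} {Q : Type*} (A : Automaton Q) (σ : TransStrat n d A) (w : Word)
    (k : ℕ) : Trans Q :=
  σ.app ((List.range k).map w) (stateAt A σ w k) (w k)

/-- The transition strategy `σ` is winning for the set of words `L`. -/
def WinningFor {n d : ℕ} {Q : Type*} (A : Automaton Q) (σ : TransStrat n d A)
    (L : Set Word) : Prop :=
  ∀ w ∈ L, Accepting (followRun A σ w)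

/-- `A` is good for games: some transition strategy is winning for the whole `L(A)`. -/
def GFG (n d : ℕ) {Q : Type*} (A : Automaton Q) : Prop :=
  ∃ σ : TransStrat n d A, WinningFor A σ (Lang A)

/-- `A` is a parity-games separator. -/
def PGSeparator (n d : ℕ) {Q : Type*} (A : Automaton Q) : Prop :=
  (∀ w ∈ PosEven n d, w ∈ Lang A) ∧ ∀ w ∈ PosOdd n d, w ∉ Lang A

/-- `A` is a strong PG separator: additionally it rejects all of `LimsupOdd`. -/
def StrongPGSeparator (n d : ℕ) {Q : Type*} (A : Automaton Q) : Prop :=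
  PGSeparator n d A ∧ ∀ w : Word, LimsupOdd w → w ∉ Lang A

/-- `A` is suitable for parity games (SFPG). -/
def SFPG (n d : ℕ) {Q : Type*} (A : Automaton Q) : Prop :=
  PGSeparator n d A ∧
  ∀ (G : GameGraph n d) (τ : EPosStrat G), EWinningPos τ →
    ∃ σ : TransStrat n d A, WinningFor A σ {w | ArisesE τ w}

/-- A generic game with parity winning condition, over an arbitrary set of nodes. -/
structure PGame (V : Type*) where
  evenOwn : V → Prop
  start : V
  edges : Set (V × ℕ × V)

/-- A play of a generic game. -/
def PGame.IsPlay {V : Type*} (g : PGame V) (w : ℕ → V × ℕ × V) : Prop :=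
  (w 0).1 = g.start ∧ IsPathSeq g.edges w

/-- `IsFinPath E u l v`: the list of edges `l` is a finite path from `u` to `v`. -/
def IsFinPath {V : Type*} (E : Set (V × ℕ × V)) : V → List (V × ℕ × V) → V → Prop
  | u, [], v => u = v
  | u, e :: l, v => e ∈ E ∧ e.1 = u ∧ IsFinPath E e.2.2 l v

/-- Even has a winning strategy in the game `g`. -/
def EvenWins {V : Type*} (g : PGame V) : Prop :=
  ∃ str : List (V × ℕ × V) → V × ℕ × V,
    (∀ l v, IsFinPath g.edges g.start l v → g.evenOwn v →
      str l ∈ g.edges ∧ (str l).1 = v) ∧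
    ∀ w, g.IsPlay w → (∀ k, g.evenOwn ((w k).1) → w k = str ((List.range k).map w)) →
      MaxInfOftEven fun k => (w k).2.1

/-- Odd has a winning strategy in the game `g`. -/
def OddWins {V : Type*} (g : PGame V) : Prop :=
  ∃ str : List (V × ℕ × V) → V × ℕ × V,
    (∀ l v, IsFinPath g.edges g.start l v → ¬ g.evenOwn v →
      str l ∈ g.edges ∧ (str l).1 = v) ∧
    ∀ w, g.IsPlay w → (∀ k, ¬ g.evenOwn ((w k).1) → w k = str ((List.range k).map w)) →
      ¬ MaxInfOftEven fun k => (w k).2.1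

/-- Even has a strategy winning for the safety condition `safe` in the game `g`. -/
def EvenWinsSafety {V : Type*} (g : PGame V) (safe : V → Prop) : Prop :=
  ∃ str : List (V × ℕ × V) → V × ℕ × V,
    (∀ l v, IsFinPath g.edges g.start l v → g.evenOwn v →
      str l ∈ g.edges ∧ (str l).1 = v) ∧
    ∀ w, g.IsPlay w → (∀ k, g.evenOwn ((w k).1) → w k = str ((List.range k).map w)) →
      ∀ k, safe (w k).2.2

/-- A game graph viewed as a generic game. -/
def GameGraph.toPGame {n d : ℕ} (G : GameGraph n d) : PGame ℕ :=
  { evenOwn := fun v => v ∈ G.evenN, start := G.start, edges := G.edges }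

/-- The synchronized product `G × A`. -/
def prodGame {n d : ℕ} {Q : Type*} (G : GameGraph n d) (A : Automaton Q) :
    PGame ((ℕ ⊕ Letter) × Q) where
  evenOwn := fun x => match x.1 with
    | Sum.inl v => v ∈ G.evenN
    | Sum.inr _ => True
  start := (Sum.inl G.start, A.init)
  edges := {ed | (∃ e ∈ G.edges, ∃ s : Q, ed = ((Sum.inl e.1, s), 1, (Sum.inr e, s))) ∨
    (∃ t ∈ A.trans, tLetter t ∈ G.edges ∧
      ed = ((Sum.inr (tLetter t), tSrc t), tPrio t, (Sum.inl (tLetter t).2.2, tTgt t)))}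

/-- The number of registers: `rn(n) = 1 + ⌊log₂ n⌋`. -/
def rn (n : ℕ) : ℕ := 1 + Nat.log 2 n

/-- Update of a register state (bottom register first) by priority `p`:
the maximal prefix of registers smaller than `p` is replaced by `p`. -/
def update (p : ℕ) : List ℕ → List ℕ
  | [] => []
  | r :: l => if r < p then p :: update p l else r :: l

/-- The `k`-reset (registers numbered from 1, bottom first): the `k`-th register is
removed and a `1` is inserted at the bottom. -/
def resetReg (k : ℕ) (l : List ℕ) : List ℕ := 1 :: l.eraseIdx (k - 1)

/-- The value of register number `k` (registers numbered from 1, bottom first). -/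
def regVal (k : ℕ) (l : List ℕ) : ℕ := l.getD (k - 1) 0

/-- Lehtinen's register automaton `R_{n,d}`. -/
def Raut (n d : ℕ) : Automaton (List ℕ) where
  init := List.replicate (rn n) 1
  trans := {t | ∃ s e, InAlph n d e ∧
    (t = (s, e, 1, update (prio e) s) ∨
     ∃ k, 1 ≤ k ∧ k ≤ rn n ∧
       ((Even (regVal k (update (prio e) s)) ∧
           t = (s, e, 2 * k, resetReg k (update (prio e) s))) ∨
        (Odd (regVal k (update (prio e) s)) ∧
           t = (s, e, 2 * k + 1, resetReg k (update (prio e) s)))))}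

/-- States of the safety automaton `S_{n,d}`: `none` is the rejecting state `rej`;
otherwise a state of `R_{n,d}` together with a tuple of counters (bottom first:
`c_0` is the head). -/
abbrev SState : Type := Option (List ℕ × List ℕ)

/-- Counters `c_0,…,c_{k-1}` are reset to `c0`; the rest is kept. -/
def bumpKeep (c0 k : ℕ) (c : List ℕ) : List ℕ := List.replicate k c0 ++ c.drop k

/-- Counters `c_0,…,c_{k-1}` are reset to `c0`; counter `c_k` is decremented. -/
def bumpDec (c0 k : ℕ) (c : List ℕ) : List ℕ :=
  List.replicate k c0 ++ ((c.getD k 0 - 1) :: c.drop (k + 1))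

/-- The safety automaton `S_{n,d}`. -/
def Saut (n d : ℕ) : Automaton SState where
  init := some (List.replicate (rn n) 1, List.replicate (rn n + 1) n)
  trans := {t |
    (∃ e, InAlph n d e ∧ t = (none, e, 1, none)) ∨
    (∃ s c e k s', 1 ≤ k ∧ (s, e, 2 * k, s') ∈ (Raut n d).trans ∧
       t = (some (s, c), e, 2, some (s', bumpKeep n k c))) ∨
    (∃ s c e k s', (s, e, 2 * k + 1, s') ∈ (Raut n d).trans ∧
       ((1 < c.getD k 0 ∧ t = (some (s, c), e, 2, some (s', bumpDec n k c))) ∨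
        (c.getD k 0 = 1 ∧ t = (some (s, c), e, 1, none))))}

/-- `bad(ρ) ≤ B` for an infinite run `ρ`: every infix containing no transition of
priority above an odd `p` contains at most `B` transitions of priority `p`. -/
def badLE {Q : Type*} (ρ : ℕ → Trans Q) (B : ℕ) : Prop :=
  ∀ a b p, Odd p → (∀ i, a ≤ i → i < b → tPrio (ρ i) ≤ p) →
    ((Finset.Ico a b).filter fun i => tPrio (ρ i) = p).card ≤ B

/-- `bad(ρ) ≤ B` for a partial run of length `L` (possibly infinite). -/
def badLEPartial {Q : Type*} (ρ : ℕ → Trans Q) (L : ℕ∞) (B : ℕ) : Prop :=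
  ∀ (a b p : ℕ), Odd p → (b : ℕ∞) ≤ L → (∀ i, a ≤ i → i < b → tPrio (ρ i) ≤ p) →
    ((Finset.Ico a b).filter fun i => tPrio (ρ i) = p).card ≤ B

/-- The strategy subgraph `G_τ`: all outgoing edges of Odd's nodes, and only the
chosen edge from each of Even's nodes. -/
def GtauEdges {n d : ℕ} (G : GameGraph n d) (τ : EPosStrat G) : Set Letter :=
  {e | e ∈ G.edges ∧ (e.1 ∈ G.evenN → e = τ.choice e.1)}

/-- One step along an edge of `E`. -/
def StepRel (E : Set Letter) (u v : ℕ) : Prop := ∃ p, (u, p, v) ∈ E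

/-- Reachability along edges of `E`. -/
def Reach (E : Set Letter) : ℕ → ℕ → Prop := Relation.ReflTransGen (StepRel E)

/-- `V_τ`: the nodes of `G_τ` reachable from the starting node. -/
def Vtau {n d : ℕ} (G : GameGraph n d) (τ : EPosStrat G) : Set ℕ :=
  {v | Reach (GtauEdges G τ) G.start v}

/-- `G_{S,p}`: edges of `E` inside `S` of priority at most `p`. -/
def subEdges (E : Set Letter) (S : Set ℕ) (p : ℕ) : Set Letter :=
  {e | e ∈ E ∧ e.1 ∈ S ∧ e.2.2 ∈ S ∧ prio e ≤ p}

/-- `parts` lists the strongly connected components of the graph `(S, E)` in a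
topological order. -/
def IsSCCDecomp (E : Set Letter) (S : Set ℕ) (parts : List (Set ℕ)) : Prop :=
  (∀ P ∈ parts, P.Nonempty ∧ P ⊆ S) ∧
  (∀ v ∈ S, ∃ P ∈ parts, v ∈ P) ∧
  List.Pairwise Disjoint parts ∧
  (∀ P ∈ parts, ∀ u ∈ P, ∀ v ∈ S, ((Reach E u v ∧ Reach E v u) ↔ v ∈ P)) ∧
  (∀ (i j : ℕ) (hi : i < parts.length) (hj : j < parts.length), i < j →
    ∀ u ∈ parts.get ⟨j, hj⟩, ∀ v ∈ parts.get ⟨i, hi⟩, ¬ StepRel E u v)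

/-- The nodes of a tree given by the children function `ch` with root `(r, R)`. -/
inductive TreeNode (ch : ℕ → Set ℕ → List (Set ℕ)) (r : ℕ) (R : Set ℕ) :
    ℕ → Set ℕ → Prop where
  | root : TreeNode ch r R r R
  | child {k : ℕ} {S T : Set ℕ} : TreeNode ch r R (k + 1) S → T ∈ ch (k + 1) S →
      TreeNode ch r R k T

/-- `ch` describes a game tree of `G_τ`: the root is `(⌈d/2⌉, V_τ)`, and the children
of a node `(k+1, S)` are the SCCs of `G_{S,2(k+1)-1}` in topological order. -/
def IsGameTree {n d : ℕ} (G : GameGraph n d) (τ : EPosStrat G)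
    (ch : ℕ → Set ℕ → List (Set ℕ)) : Prop :=
  ∀ k S, TreeNode ch ((d + 1) / 2) (Vtau G τ) (k + 1) S →
    IsSCCDecomp (subEdges (GtauEdges G τ) S (2 * (k + 1) - 1)) S (ch (k + 1) S)

/-- `fstl ch l k S`: the leftmost descendant of the node `(k, S)` on level `l`
(for `l ≤ k`). -/
def fstl (ch : ℕ → Set ℕ → List (Set ℕ)) (l : ℕ) : ℕ → Set ℕ → Set ℕ
  | 0, S => S
  | k + 1, S => if l = k + 1 then S else fstl ch l k ((ch (k + 1) S).headD ∅)


section Helpers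

lemma mono_of_step (F : ℕ → ℕ) (N : ℕ) (hmono : ∀ k, N ≤ k → F (k+1) ≤ F k) :
    ∀ a b, N ≤ a → a ≤ b → F b ≤ F a := by
  intro a b ha hab
  induction b, hab using Nat.le_induction with
  | base => exact le_rfl
  | succ b hab ih => exact le_trans (hmono b (le_trans ha hab)) ih

lemma descent (F : ℕ → ℕ) (S : ℕ → Prop) (N : ℕ)
    (hmono : ∀ k, N ≤ k → F (k+1) ≤ F k)
    (hstrict : ∀ k, N ≤ k → S k → F (k+1) < F k)
    (hinf : ∀ K, ∃ k, K ≤ k ∧ S k) : False := by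
  have key : ∀ i, ∃ k, N ≤ k ∧ F k + i ≤ F N := by
    intro i
    induction i with
    | zero => exact ⟨N, le_rfl, by omega⟩
    | succ i ih =>
      obtain ⟨k, hk, hle⟩ := ih
      obtain ⟨k', hkk', hS⟩ := hinf k
      have h1 : F k' ≤ F k := mono_of_step F N hmono k k' hk hkk'
      have h2 : F (k'+1) < F k' := hstrict k' (le_trans hk hkk') hS
      exact ⟨k'+1, by omega, by omega⟩
  obtain ⟨k, _, h⟩ := key (F N + 1)
  omega

lemma exists_infOft (f : ℕ → ℕ) (D : ℕ) (hD : ∀ k, f k ≤ D) : ∃ p, InfOft f p := by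
  by_contra h
  push_neg at h
  have h' : ∀ p, ∃ N, ∀ k, N ≤ k → f k ≠ p := by
    intro p
    have hp := h p
    unfold InfOft at hp
    push_neg at hp
    exact hp
  choose Nf hNf using h'
  have hfM : f ((Finset.range (D+1)).sup Nf) ∈ Finset.range (D+1) :=
    Finset.mem_range.mpr (by have := hD ((Finset.range (D+1)).sup Nf); omega)
  exact hNf _ _ (Finset.le_sup hfM) rfl

lemma exists_max_infOft (f : ℕ → ℕ) (D : ℕ) (hD : ∀ k, f k ≤ D) :
    ∃ p, InfOft f p ∧ ∀ q, InfOft f q → q ≤ p := by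
  classical
  obtain ⟨p, hp⟩ := exists_infOft f D hD
  have hle : ∀ q, InfOft f q → q ≤ D := by
    intro q hq; obtain ⟨k, _, hk⟩ := hq 0; rw [← hk]; exact hD k
  exact ⟨Nat.findGreatest (InfOft f) D, Nat.findGreatest_spec (hle p hp) hp,
    fun q hq => Nat.le_findGreatest (hle q hq) hq⟩

lemma eventually_le_max (f : ℕ → ℕ) (D p : ℕ) (hD : ∀ k, f k ≤ D)
    (hmax : ∀ q, InfOft f q → q ≤ p) : ∃ N, ∀ k, N ≤ k → f k ≤ p := by
  classical
  have h : ∀ q, p < q → ∃ N, ∀ k, N ≤ k → f k ≠ q := by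
    intro q hq
    by_contra hc
    push_neg at hc
    have : InfOft f q := by
      intro N; obtain ⟨k, hk1, hk2⟩ := hc N; exact ⟨k, hk1, hk2⟩
    exact absurd (hmax q this) (by omega)
  set Nf : ℕ → ℕ := fun q => if hq : ∃ N, ∀ k, N ≤ k → f k ≠ q then hq.choose else 0 with hNfd
  refine ⟨(Finset.range (D+1)).sup Nf, ?_⟩
  intro k hk
  by_contra hc
  push_neg at hc
  have hex := h (f k) hc
  have hmem : f k ∈ Finset.range (D+1) := Finset.mem_range.mpr (by have := hD k; omega)
  have hle : Nf (f k) ≤ (Finset.range (D+1)).sup Nf := Finset.le_sup hmem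
  have hNfk : Nf (f k) = hex.choose := by rw [hNfd]; exact dif_pos hex
  exact hex.choose_spec k (by omega) rfl

end Helpers
section ListLemmas

lemma getD_drop' (l : List ℕ) : ∀ (k i : ℕ), (l.drop k).getD i 0 = l.getD (k + i) 0 := by
  induction l with
  | nil => intro k i; simp
  | cons a t ih =>
    intro k i
    cases k with
    | zero => simp
    | succ k =>
      rw [List.drop_succ_cons]
      have h : k + 1 + i = (k + i) + 1 := by omega
      rw [h, List.getD_cons_succ]
      exact ih k i

lemma getD_eraseIdx_ge (l : List ℕ) : ∀ (j i : ℕ), j ≤ i →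
    (l.eraseIdx j).getD i 0 = l.getD (i+1) 0 := by
  induction l with
  | nil => intro j i _; simp
  | cons a t ih =>
    intro j i hj
    cases j with
    | zero => simp [List.eraseIdx]
    | succ j =>
      cases i with
      | zero => omega
      | succ i =>
        rw [List.eraseIdx_cons_succ, List.getD_cons_succ, List.getD_cons_succ]
        exact ih j i (by omega)

lemma getD_replicate' (v : ℕ) : ∀ (N i : ℕ), i < N → (List.replicate N v).getD i 0 = v := by
  intro N
  induction N with
  | zero => intro i hi; omega
  | succ N ih =>
    intro i hi
    cases i with
    | zero => simp [List.replicate]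
    | succ i => rw [List.replicate_succ, List.getD_cons_succ]; exact ih i (by omega)

lemma getD_replicate_le (v : ℕ) : ∀ (N i : ℕ), (List.replicate N v).getD i 0 ≤ v := by
  intro N i
  by_cases h : i < N
  · rw [getD_replicate' v N i h]
  · rw [List.getD_eq_default]
    · omega
    · simp; omega

lemma update_length (p : ℕ) : ∀ l : List ℕ, (update p l).length = l.length := by
  intro l
  induction l with
  | nil => rfl
  | cons a t ih =>
    show (if a < p then p :: update p t else a :: t).length = _
    split <;> simp [ih]

lemma mem_update {p x : ℕ} : ∀ {l : List ℕ}, x ∈ update p l → x = p ∨ x ∈ l := by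
  intro l
  induction l with
  | nil => intro h; simp [update] at h
  | cons a t ih =>
    intro h
    by_cases hc : a < p
    · rw [show update p (a :: t) = p :: update p t from by simp [update, hc]] at h
      rcases List.mem_cons.mp h with h | h
      · exact Or.inl h
      · rcases ih h with h | h
        · exact Or.inl h
        · exact Or.inr (by simp [h])
    · rw [show update p (a :: t) = a :: t from by simp [update, hc]] at h
      exact Or.inr h

lemma update_one (l : List ℕ) (h : ∀ x ∈ l, 1 ≤ x) : update 1 l = l := by
  cases l with
  | nil => rfl
  | cons a t =>
    have ha : ¬ a < 1 := by have := h a (by simp); omega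
    simp [update, ha]

lemma update_sorted_eq_map (p : ℕ) : ∀ (l : List ℕ), l.Pairwise (· ≤ ·) →
    update p l = l.map (fun x => max p x) := by
  intro l
  induction l with
  | nil => intro _; rfl
  | cons a t ih =>
    intro hs
    rw [List.pairwise_cons] at hs
    by_cases h : a < p
    · have hmax : max p a = p := by omega
      simp only [List.map_cons, hmax]
      rw [show update p (a :: t) = p :: update p t from by simp [update, h]]
      rw [ih hs.2]
    · have hmax : max p a = a := by omega
      have ht : t.map (fun x => max p x) = t := by
        conv_rhs => rw [← List.map_id t]
        exact List.map_congr_left (fun x hx => by have := hs.1 x hx; simp; omega)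
      rw [show update p (a :: t) = a :: t from by simp [update, h]]
      simp only [List.map_cons, hmax, ht]

lemma getD_map' (f : ℕ → ℕ) : ∀ (l : List ℕ) (i : ℕ), i < l.length →
    (l.map f).getD i 0 = f (l.getD i 0) := by
  intro l
  induction l with
  | nil => intro i hi; simp at hi
  | cons a t ih =>
    intro i hi
    cases i with
    | zero => simp
    | succ i =>
      rw [List.map_cons, List.getD_cons_succ, List.getD_cons_succ]
      exact ih i (by simpa using Nat.lt_of_succ_lt_succ hi)

lemma getD_update (p : ℕ) (l : List ℕ) (hs : l.Pairwise (· ≤ ·)) (i : ℕ) (hi : i < l.length) :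
    (update p l).getD i 0 = max p (l.getD i 0) := by
  rw [update_sorted_eq_map p l hs]
  exact getD_map' _ l i hi

lemma update_sorted (p : ℕ) (l : List ℕ) (hs : l.Pairwise (· ≤ ·)) :
    (update p l).Pairwise (· ≤ ·) := by
  rw [update_sorted_eq_map p l hs]
  exact List.Pairwise.map _ (fun a b hab => max_le_max le_rfl hab) hs

lemma countP_eraseIdx (p : ℕ → Bool) : ∀ (l : List ℕ) (i : ℕ), i < l.length →
    List.countP p (l.eraseIdx i) + (if p (l.getD i 0) then 1 else 0) = List.countP p l := by
  intro l
  induction l with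
  | nil => intro i hi; simp at hi
  | cons a t ih =>
    intro i hi
    cases i with
    | zero => simp [List.countP_cons]
    | succ i =>
      rw [List.eraseIdx_cons_succ, List.countP_cons, List.countP_cons, List.getD_cons_succ]
      have := ih i (by simpa using Nat.lt_of_succ_lt_succ hi)
      omega

lemma countP_take_erase (p : ℕ → Bool) : ∀ (l : List ℕ) (j m : ℕ), j < m → m ≤ l.length →
    List.countP p ((l.eraseIdx j).take (m-1)) + (if p (l.getD j 0) then 1 else 0) =
      List.countP p (l.take m) := by
  intro l
  induction l with
  | nil => intro j m h1 h2; simp at h2; omega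
  | cons a t ih =>
    intro j m h1 h2
    cases j with
    | zero =>
      obtain ⟨m', rfl⟩ : ∃ m', m = m'+1 := ⟨m-1, by omega⟩
      simp [List.countP_cons]
    | succ j =>
      obtain ⟨m'', rfl⟩ : ∃ m'', m = m''+2 := ⟨m-2, by omega⟩
      rw [List.eraseIdx_cons_succ]
      have h3 : m'' + 2 - 1 = m'' + 1 := rfl
      rw [h3, List.take_succ_cons, List.take_succ_cons, List.countP_cons, List.countP_cons,
        List.getD_cons_succ]
      have := ih j (m''+1) (by omega) (by simp at h2; omega)
      have h4 : m'' + 1 - 1 = m'' := rfl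
      rw [h4] at this
      omega

lemma countP_take_resetReg (p : ℕ → Bool) (u : List ℕ) (j m : ℕ) (h0 : 1 ≤ j) (h1 : j ≤ m)
    (h2 : m ≤ u.length) (hp : p 1 = false) :
    List.countP p ((resetReg j u).take m) + (if p (u.getD (j-1) 0) then 1 else 0) =
      List.countP p (u.take m) := by
  obtain ⟨m', rfl⟩ : ∃ m', m = m'+1 := ⟨m-1, by omega⟩
  unfold resetReg
  rw [List.take_succ_cons, List.countP_cons, hp]
  have := countP_take_erase p u (j-1) (m'+1) (by omega) h2
  have h3 : m' + 1 - 1 = m' := rfl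
  rw [h3] at this
  simpa using this

lemma getD_resetReg_ge (u : List ℕ) (j i : ℕ) (h0 : 1 ≤ j) (h1 : j ≤ i) :
    (resetReg j u).getD i 0 = u.getD i 0 := by
  unfold resetReg
  obtain ⟨i', rfl⟩ : ∃ i', i = i'+1 := ⟨i-1, by omega⟩
  rw [List.getD_cons_succ]
  exact getD_eraseIdx_ge u (j-1) i' (by omega)

lemma resetReg_length (u : List ℕ) (j : ℕ) (h0 : 1 ≤ j) (h1 : j ≤ u.length) :
    (resetReg j u).length = u.length := by
  unfold resetReg
  rw [List.length_cons, List.length_eraseIdx, if_pos (by omega)]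
  omega

lemma resetReg_sorted (u : List ℕ) (j : ℕ) (hs : u.Pairwise (· ≤ ·)) (h1 : ∀ x ∈ u, 1 ≤ x) :
    (resetReg j u).Pairwise (· ≤ ·) := by
  unfold resetReg
  rw [List.pairwise_cons]
  exact ⟨fun b hb => h1 b ((List.eraseIdx_sublist u (j-1)).mem hb),
    List.Pairwise.sublist (List.eraseIdx_sublist u (j-1)) hs⟩

lemma mem_resetReg {x : ℕ} {u : List ℕ} {j : ℕ} (h : x ∈ resetReg j u) : x = 1 ∨ x ∈ u := by
  unfold resetReg at h
  rcases List.mem_cons.mp h with h | h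
  · exact Or.inl h
  · exact Or.inr ((List.eraseIdx_sublist u (j-1)).mem h)

lemma sorted_replicate (N v : ℕ) : (List.replicate N v).Pairwise (· ≤ ·) := by
  induction N with
  | zero => simp
  | succ N ih =>
    rw [List.replicate_succ, List.pairwise_cons]
    exact ⟨fun b hb => by rw [List.eq_of_mem_replicate hb], ih⟩

lemma getD_bumpKeep_lt (c0 k : ℕ) (c : List ℕ) {i : ℕ} (h : i < k) :
    (bumpKeep c0 k c).getD i 0 = c0 := by
  unfold bumpKeep
  rw [List.getD_append _ _ _ _ (by simp; omega)]
  exact getD_replicate' c0 k i h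

lemma getD_bumpKeep_ge (c0 k : ℕ) (c : List ℕ) {i : ℕ} (h : k ≤ i) :
    (bumpKeep c0 k c).getD i 0 = c.getD i 0 := by
  unfold bumpKeep
  rw [List.getD_append_right _ _ _ _ (by simp; omega)]
  simp only [List.length_replicate]
  rw [getD_drop']
  congr 1
  omega

lemma getD_bumpDec_lt (c0 k : ℕ) (c : List ℕ) {i : ℕ} (h : i < k) :
    (bumpDec c0 k c).getD i 0 = c0 := by
  unfold bumpDec
  rw [List.getD_append _ _ _ _ (by simp; omega)]
  exact getD_replicate' c0 k i h

lemma getD_bumpDec_eq (c0 k : ℕ) (c : List ℕ) :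
    (bumpDec c0 k c).getD k 0 = c.getD k 0 - 1 := by
  unfold bumpDec
  rw [List.getD_append_right _ _ _ _ (by simp)]
  simp

lemma getD_bumpDec_gt (c0 k : ℕ) (c : List ℕ) {i : ℕ} (h : k < i) :
    (bumpDec c0 k c).getD i 0 = c.getD i 0 := by
  unfold bumpDec
  rw [List.getD_append_right _ _ _ _ (by simp; omega)]
  simp only [List.length_replicate]
  obtain ⟨i', hi'⟩ : ∃ i', i - k = i'+1 := ⟨i - k - 1, by omega⟩
  rw [hi', List.getD_cons_succ, getD_drop']
  congr 1
  omega

lemma geo_sum (n : ℕ) (hn : 1 ≤ n) : ∀ N, (∑ i ∈ Finset.range N, (n-1) * n^i) + 1 = n^N := by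
  intro N
  induction N with
  | zero => simp
  | succ N ih =>
    rw [Finset.sum_range_succ]
    calc (∑ i ∈ Finset.range N, (n-1)*n^i) + (n-1)*n^N + 1
        = ((∑ i ∈ Finset.range N, (n-1)*n^i) + 1) + (n-1)*n^N := by ring
      _ = n^N + (n-1)*n^N := by rw [ih]
      _ = (1 + (n-1)) * n^N := by ring
      _ = n * n^N := by congr 1; omega
      _ = n^(N+1) := by rw [pow_succ]; ring

lemma sum_split (f : ℕ → ℕ) (u N : ℕ) (h : u < N) :
    ∑ i ∈ Finset.range N, f i =
      (∑ i ∈ Finset.range u, f i) + f u + ∑ i ∈ Finset.Ico (u+1) N, f i := by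
  rw [Finset.range_eq_Ico, ← Finset.sum_Ico_consecutive f (Nat.zero_le u) (le_of_lt h),
      Finset.sum_eq_sum_Ico_succ_bot h f, ← Finset.range_eq_Ico]
  ring

end ListLemmas
section Extraction

/-- Data extracted from an accepting run of `S_{n,d}`. -/
structure RunData (n d : ℕ) (w : Word) where
  s : ℕ → List ℕ
  c : ℕ → List ℕ
  j : ℕ → ℕ
  b : ℕ → Bool
  hs0 : s 0 = List.replicate (rn n) 1
  hc0 : c 0 = List.replicate (rn n + 1) n
  hjle : ∀ k, j k ≤ rn n
  halph : ∀ k, InAlph n d (w k)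
  heven : ∀ k, b k = true → 1 ≤ j k ∧ Even (regVal (j k) (update (prio (w k)) (s k))) ∧
    s (k+1) = resetReg (j k) (update (prio (w k)) (s k)) ∧ c (k+1) = bumpKeep n (j k) (c k)
  hodd : ∀ k, b k = false → 1 < (c k).getD (j k) 0 ∧ c (k+1) = bumpDec n (j k) (c k) ∧
    ((j k = 0 ∧ s (k+1) = update (prio (w k)) (s k)) ∨
     (1 ≤ j k ∧ Odd (regVal (j k) (update (prio (w k)) (s k))) ∧
       s (k+1) = resetReg (j k) (update (prio (w k)) (s k))))

lemma quad_eq {Q : Type} {a a' : Q} {e e' : Letter} {p p' : ℕ} {q q' : Q}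
    (h : (a, e, p, q) = (a', e', p', q')) : a = a' ∧ e = e' ∧ p = p' ∧ q = q' :=
  ⟨congrArg (fun t => t.1) h, congrArg (fun t => t.2.1) h,
   congrArg (fun t => t.2.2.1) h, congrArg (fun t => t.2.2.2) h⟩

lemma raut_even {n d : ℕ} {s s' : List ℕ} {e : Letter} {k : ℕ} (hk : 1 ≤ k)
    (h : (s, e, 2*k, s') ∈ (Raut n d).trans) :
    InAlph n d e ∧ k ≤ rn n ∧ Even (regVal k (update (prio e) s)) ∧
      s' = resetReg k (update (prio e) s) := by
  obtain ⟨s0, e0, hal, hcase⟩ := h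
  rcases hcase with heq | ⟨k', hk1, hk2, hcase⟩
  · obtain ⟨hs, he, hp, hs'⟩ := quad_eq heq
    omega
  · rcases hcase with ⟨hev, heq⟩ | ⟨hodd, heq⟩
    · obtain ⟨hs, he, hp, hs'⟩ := quad_eq heq
      have hk' : k = k' := by omega
      refine ⟨(by rw [he]; exact hal), by omega, ?_, ?_⟩
      · rw [hk', hs, he]; exact hev
      · rw [hk', hs, he]; exact hs'
    · obtain ⟨hs, he, hp, hs'⟩ := quad_eq heq
      omega

lemma raut_odd {n d : ℕ} {s s' : List ℕ} {e : Letter} {k : ℕ}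
    (h : (s, e, 2*k+1, s') ∈ (Raut n d).trans) :
    InAlph n d e ∧ k ≤ rn n ∧
      ((k = 0 ∧ s' = update (prio e) s) ∨
       (1 ≤ k ∧ Odd (regVal k (update (prio e) s)) ∧ s' = resetReg k (update (prio e) s))) := by
  have hrn : 1 ≤ rn n := by unfold rn; omega
  obtain ⟨s0, e0, hal, hcase⟩ := h
  rcases hcase with heq | ⟨k', hk1, hk2, hcase⟩
  · obtain ⟨hs, he, hp, hs'⟩ := quad_eq heq
    have hk0 : k = 0 := by omega
    refine ⟨(by rw [he]; exact hal), by omega, Or.inl ⟨hk0, ?_⟩⟩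
    rw [hs, he]; exact hs'
  · rcases hcase with ⟨hev, heq⟩ | ⟨hodd, heq⟩
    · obtain ⟨hs, he, hp, hs'⟩ := quad_eq heq
      omega
    · obtain ⟨hs, he, hp, hs'⟩ := quad_eq heq
      have hk' : k = k' := by omega
      refine ⟨(by rw [he]; exact hal), by omega, Or.inr ⟨by omega, ?_, ?_⟩⟩
      · rw [hk', hs, he]; exact hodd
      · rw [hk', hs, he]; exact hs'

lemma run_extract {n d : ℕ} {w : Word} (hw : w ∈ Lang (Saut n d)) :
    Nonempty (RunData n d w) := by
  classical
  obtain ⟨ρ, hrun, hread, hacc⟩ := hw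
  have hstep : ∀ k, (ρ k).1 = none → tPrio (ρ k) = 1 ∧ (ρ (k+1)).1 = none := by
    intro k hk
    obtain ⟨hmem, htgt⟩ := hrun.2 k
    rcases hmem with ⟨e, _, heq⟩ | ⟨s0, c0, e, k0, s0', _, _, heq⟩ |
      ⟨s0, c0, e, k0, s0', _, hcase⟩
    · constructor
      · show (ρ k).2.2.1 = 1
        rw [heq]
      · have h3 : tTgt (ρ k) = tSrc (ρ (k+1)) := htgt
        unfold tTgt tSrc at h3
        rw [← h3, heq]
    · rw [heq] at hk; simp at hk
    · rcases hcase with ⟨_, heq⟩ | ⟨_, heq⟩ <;> (rw [heq] at hk; simp at hk)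
  have hpers : ∀ k, (ρ k).1 = none → ∀ i, (ρ (k+i)).1 = none := by
    intro k hk i
    induction i with
    | zero => exact hk
    | succ i ih =>
      have h5 : k + (i + 1) = (k + i) + 1 := by omega
      rw [h5]
      exact (hstep _ ih).2
  have hsrc : ∀ k, (ρ k).1 ≠ none := by
    intro k hk
    obtain ⟨p, hpe, hpinf, _⟩ := hacc
    obtain ⟨k', hk', hpk⟩ := hpinf k
    have hpk' : tPrio (ρ k') = p := hpk
    have h6 : (ρ k').1 = none := by
      have := hpers k hk (k' - k)
      rwa [Nat.add_sub_cancel' hk'] at this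
    have h7 : tPrio (ρ k') = 1 := (hstep k' h6).1
    rw [h7] at hpk'
    rw [← hpk'] at hpe
    exact (by decide : ¬ Even 1) hpe
  have hsc' : ∀ k, ∃ pr : List ℕ × List ℕ, (ρ k).1 = some pr := by
    intro k
    cases hh : (ρ k).1 with
    | none => exact absurd hh (hsrc k)
    | some pr => exact ⟨pr, rfl⟩
  choose sc hsc using hsc'
  have h0 : sc 0 = (List.replicate (rn n) 1, List.replicate (rn n + 1) n) := by
    have h1 : tSrc (ρ 0) = (Saut n d).init := hrun.1
    unfold tSrc Saut at h1
    rw [hsc 0] at h1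
    exact Option.some.inj h1
  have hmain : ∀ k, ∃ jj : ℕ, ∃ bb : Bool, jj ≤ rn n ∧ InAlph n d (w k) ∧
      (bb = true → 1 ≤ jj ∧ Even (regVal jj (update (prio (w k)) (sc k).1)) ∧
        (sc (k+1)).1 = resetReg jj (update (prio (w k)) (sc k).1) ∧
        (sc (k+1)).2 = bumpKeep n jj (sc k).2) ∧
      (bb = false → 1 < (sc k).2.getD jj 0 ∧ (sc (k+1)).2 = bumpDec n jj (sc k).2 ∧
        ((jj = 0 ∧ (sc (k+1)).1 = update (prio (w k)) (sc k).1) ∨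
         (1 ≤ jj ∧ Odd (regVal jj (update (prio (w k)) (sc k).1)) ∧
           (sc (k+1)).1 = resetReg jj (update (prio (w k)) (sc k).1)))) := by
    intro k
    obtain ⟨hmem, htgt⟩ := hrun.2 k
    have htgt' : (ρ k).2.2.2 = (ρ (k+1)).1 := htgt
    have hre : (ρ k).2.1 = w k := hread k
    rcases hmem with ⟨e, _, heq⟩ | ⟨s0, c0, e, k0, s0', hk0, hR, heq⟩ |
      ⟨s0, c0, e, k0, s0', hR, hcase⟩
    · exfalso
      exact hsrc k (by rw [heq])
    · -- even reset
      have h1 : some (sc k) = some (s0, c0) := by rw [← hsc k, heq]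
      have hsck := Option.some.inj h1
      have hs0 : (sc k).1 = s0 := by rw [hsck]
      have hc0 : (sc k).2 = c0 := by rw [hsck]
      subst hs0; subst hc0
      have he : e = w k := by rw [← hre, heq]
      subst he
      have h3 : some (sc (k+1)) = some (s0', bumpKeep n k0 (sc k).2) := by
        rw [← hsc (k+1), ← htgt', heq]
      have hsck1 := Option.some.inj h3
      have hA : (sc (k+1)).1 = s0' := by rw [hsck1]
      have hB : (sc (k+1)).2 = bumpKeep n k0 (sc k).2 := by rw [hsck1]
      subst hA
      obtain ⟨hal, hk2, hev, hs'⟩ := raut_even hk0 hR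
      exact ⟨k0, true, hk2, hal, fun _ => ⟨hk0, hev, hs', hB⟩, fun hf => by simp at hf⟩
    · -- odd
      rcases hcase with ⟨hgt, heq⟩ | ⟨_, heq⟩
      · have h1 : some (sc k) = some (s0, c0) := by rw [← hsc k, heq]
        have hsck := Option.some.inj h1
        have hs0 : (sc k).1 = s0 := by rw [hsck]
        have hc0 : (sc k).2 = c0 := by rw [hsck]
        subst hs0; subst hc0
        have he : e = w k := by rw [← hre, heq]
        subst he
        have h3 : some (sc (k+1)) = some (s0', bumpDec n k0 (sc k).2) := by
          rw [← hsc (k+1), ← htgt', heq]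
        have hsck1 := Option.some.inj h3
        have hA : (sc (k+1)).1 = s0' := by rw [hsck1]
        have hB : (sc (k+1)).2 = bumpDec n k0 (sc k).2 := by rw [hsck1]
        subst hA
        obtain ⟨hal, hk2, hcase2⟩ := raut_odd hR
        refine ⟨k0, false, hk2, hal, fun ht => by simp at ht, fun _ => ⟨hgt, hB, ?_⟩⟩
        rcases hcase2 with ⟨hk00, hs'⟩ | ⟨hk01, hoddv, hs'⟩
        · exact Or.inl ⟨hk00, hs'⟩
        · exact Or.inr ⟨hk01, hoddv, hs'⟩
      · exfalso
        have h3 : (ρ k).2.2.2 = none := by rw [heq]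
        rw [htgt'] at h3
        exact hsrc (k+1) h3
  choose jj bb hjle halph heven hodd using hmain
  exact ⟨⟨fun k => (sc k).1, fun k => (sc k).2, jj, bb,
    by show (sc 0).1 = _; rw [h0], by show (sc 0).2 = _; rw [h0], hjle, halph, heven, hodd⟩⟩

lemma RunData.inv {n d : ℕ} {w : Word} (rd : RunData n d w) :
    ∀ k, (rd.s k).length = rn n ∧ (rd.s k).Pairwise (· ≤ ·) ∧ ∀ x ∈ rd.s k, 1 ≤ x := by
  intro k
  induction k with
  | zero =>
    rw [rd.hs0]
    exact ⟨by simp, sorted_replicate _ _, fun x hx => by rw [List.eq_of_mem_replicate hx]⟩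
  | succ k ih =>
    obtain ⟨hlen, hsort, hone⟩ := ih
    have hplen : (update (prio (w k)) (rd.s k)).length = rn n := by
      rw [update_length]; exact hlen
    have hpsort := update_sorted (prio (w k)) _ hsort
    have hpone : ∀ x ∈ update (prio (w k)) (rd.s k), 1 ≤ x := by
      intro x hx
      rcases mem_update hx with rfl | hx
      · exact (rd.halph k).2.2.1
      · exact hone x hx
    have hreset : ∀ jjv, 1 ≤ jjv → jjv ≤ rn n →
        (resetReg jjv (update (prio (w k)) (rd.s k))).length = rn n ∧
        (resetReg jjv (update (prio (w k)) (rd.s k))).Pairwise (· ≤ ·) ∧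
        ∀ x ∈ resetReg jjv (update (prio (w k)) (rd.s k)), 1 ≤ x := by
      intro jjv h1 h2
      refine ⟨?_, resetReg_sorted _ _ hpsort hpone, fun x hx => ?_⟩
      · rw [resetReg_length _ _ h1 (by omega)]; exact hplen
      · rcases mem_resetReg hx with rfl | hx
        · exact le_rfl
        · exact hpone x hx
    cases hb : rd.b k with
    | true =>
      obtain ⟨hj1, _, hs', _⟩ := rd.heven k hb
      rw [hs']
      exact hreset _ hj1 (rd.hjle k)
    | false =>
      obtain ⟨_, _, hcase⟩ := rd.hodd k hb
      rcases hcase with ⟨_, hs'⟩ | ⟨hj1, _, hs'⟩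
      · rw [hs']; exact ⟨hplen, hpsort, hpone⟩
      · rw [hs']; exact hreset _ hj1 (rd.hjle k)

end Extraction
section Part1

lemma val_step {n d : ℕ} {w : Word} (rd : RunData n d w) (m k : ℕ)
    (hm1 : 1 ≤ m) (hmrn : m ≤ rn n) (hjm : rd.j k < m) :
    max (prio (w k)) ((rd.s k).getD (m-1) 0) ≤ (rd.s (k+1)).getD (m-1) 0 := by
  obtain ⟨hlen, hsort, _⟩ := rd.inv k
  have hmlt : m - 1 < (rd.s k).length := by omega
  have hupd : (update (prio (w k)) (rd.s k)).getD (m-1) 0 =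
      max (prio (w k)) ((rd.s k).getD (m-1) 0) := getD_update _ _ hsort _ hmlt
  cases hb : rd.b k with
  | true =>
    obtain ⟨hj1, _, hs', _⟩ := rd.heven k hb
    rw [hs', getD_resetReg_ge _ _ _ hj1 (by omega), hupd]
  | false =>
    obtain ⟨_, _, hcase⟩ := rd.hodd k hb
    rcases hcase with ⟨_, hs'⟩ | ⟨hj1, _, hs'⟩
    · rw [hs', hupd]
    · rw [hs', getD_resetReg_ge _ _ _ hj1 (by omega), hupd]

lemma cnt_step {n d : ℕ} {w : Word} (rd : RunData n d w) (P m k : ℕ)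
    (hP1 : 1 ≤ P) (hmrn : m ≤ rn n) (hfP : prio (w k) ≤ P) (hjm : rd.j k ≤ m) :
    List.countP (fun y => decide (P < y)) ((rd.s (k+1)).take m) ≤
      List.countP (fun y => decide (P < y)) ((rd.s k).take m) ∧
    (rd.b k = true → rd.j k = m → P < (update (prio (w k)) (rd.s k)).getD (m-1) 0 →
      List.countP (fun y => decide (P < y)) ((rd.s (k+1)).take m) <
        List.countP (fun y => decide (P < y)) ((rd.s k).take m)) := by
  obtain ⟨hlen, hsort, _⟩ := rd.inv k
  have hq1 : (fun y => decide (P < y)) 1 = false := by simp; omega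
  have hmU : m ≤ (update (prio (w k)) (rd.s k)).length := by rw [update_length]; omega
  have hU : List.countP (fun y => decide (P < y)) ((update (prio (w k)) (rd.s k)).take m) =
      List.countP (fun y => decide (P < y)) ((rd.s k).take m) := by
    rw [update_sorted_eq_map _ _ hsort, ← List.map_take, List.countP_map]
    refine List.countP_congr (fun a _ => ?_)
    simp only [Function.comp_apply, decide_eq_true_eq]
    omega
  cases hb : rd.b k with
  | true =>
    obtain ⟨hj1, _, hs', _⟩ := rd.heven k hb
    have key := countP_take_resetReg (fun y => decide (P < y)) _ (rd.j k) m hj1 hjm hmU hq1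
    rw [hs']
    constructor
    · omega
    · intro _ hjm' hx
      rw [hjm'] at key ⊢
      rw [if_pos (by simpa using hx)] at key
      omega
  | false =>
    obtain ⟨_, _, hcase⟩ := rd.hodd k hb
    constructor
    · rcases hcase with ⟨_, hs'⟩ | ⟨hj1, _, hs'⟩
      · rw [hs']; exact le_of_eq hU
      · have key := countP_take_resetReg (fun y => decide (P < y)) _ (rd.j k) m hj1 hjm hmU hq1
        rw [hs']
        omega
    · intro ht
      exact absurd ht (by simp)

lemma part1 {n d : ℕ} (w : Word) (hw : w ∈ Lang (Saut n d)) : LimsupEven w := by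
  classical
  obtain ⟨rd⟩ := run_extract hw
  have hf1 : ∀ k, 1 ≤ prio (w k) := fun k => (rd.halph k).2.2.1
  have hfd : ∀ k, prio (w k) ≤ d := fun k => (rd.halph k).2.2.2.1
  obtain ⟨g, hgdef⟩ : ∃ g : ℕ → ℕ, ∀ k,
      (rd.b k = true → g k = 2 * rd.j k) ∧ (rd.b k = false → g k = 2 * rd.j k + 1) :=
    ⟨fun k => if rd.b k then 2 * rd.j k else 2 * rd.j k + 1,
     fun k => ⟨fun hb => by simp [hb], fun hb => by simp [hb]⟩⟩
  have hgle : ∀ k, g k ≤ 2 * rn n + 1 := by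
    intro k
    have := rd.hjle k
    cases hbb : rd.b k with
    | true => rw [(hgdef k).1 hbb]; omega
    | false => rw [(hgdef k).2 hbb]; omega
  obtain ⟨p, hpinf, hpmax⟩ := exists_max_infOft g (2 * rn n + 1) hgle
  -- the maximal R-priority occurring infinitely often is even
  have hpeven : Even p := by
    by_contra hodd
    rw [Nat.not_even_iff_odd] at hodd
    obtain ⟨u, hu⟩ := hodd
    obtain ⟨N, hN⟩ := eventually_le_max g (2 * rn n + 1) p hgle hpmax
    refine descent (fun k => (rd.c k).getD u 0) (fun k => g k = p) N ?_ ?_ hpinf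
    · intro k hk
      show (rd.c (k+1)).getD u 0 ≤ (rd.c k).getD u 0
      have hgk := hN k hk
      cases hb : rd.b k with
      | true =>
        obtain ⟨hj1, _, _, hc'⟩ := rd.heven k hb
        have hge := (hgdef k).1 hb
        have hju : rd.j k ≤ u := by omega
        rw [hc', getD_bumpKeep_ge n _ _ hju]
      | false =>
        obtain ⟨hgt, hc', _⟩ := rd.hodd k hb
        have hge := (hgdef k).2 hb
        have hju : rd.j k ≤ u := by omega
        rw [hc']
        rcases Nat.lt_or_ge (rd.j k) u with h | h
        · rw [getD_bumpDec_gt n _ _ h]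
        · have hje : rd.j k = u := by omega
          rw [hje, getD_bumpDec_eq]
          omega
    · intro k hk hS
      show (rd.c (k+1)).getD u 0 < (rd.c k).getD u 0
      have hb : rd.b k = false := by
        cases hbb : rd.b k with
        | true => have := (hgdef k).1 hbb; omega
        | false => rfl
      have hge := (hgdef k).2 hb
      have hju : rd.j k = u := by omega
      obtain ⟨hgt, hc', _⟩ := rd.hodd k hb
      rw [hc', hju, getD_bumpDec_eq]
      rw [hju] at hgt
      omega
  obtain ⟨m, hm⟩ := hpeven
  have hp1 : 1 ≤ p := by
    obtain ⟨k0, _, hk0⟩ := hpinf 0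
    cases hbb : rd.b k0 with
    | true => have h1 := (hgdef k0).1 hbb; have h2 := rd.heven k0 hbb; omega
    | false => have h1 := (hgdef k0).2 hbb; omega
  have hm1 : 1 ≤ m := by omega
  have hmrn : m ≤ rn n := by
    obtain ⟨k0, _, hk0⟩ := hpinf 0
    have := rd.hjle k0
    cases hbb : rd.b k0 with
    | true => have h1 := (hgdef k0).1 hbb; omega
    | false => have h1 := (hgdef k0).2 hbb; omega
  obtain ⟨P, hPinf, hPmax⟩ := exists_max_infOft (fun k => prio (w k)) d hfd
  refine ⟨P, ?_, hPinf, hPmax⟩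
  by_contra hPev
  rw [Nat.not_even_iff_odd] at hPev
  have hP1 : 1 ≤ P := by
    obtain ⟨k0, _, hk0⟩ := hPinf 0
    have := hf1 k0
    have hk0' : prio (w k0) = P := hk0
    omega
  obtain ⟨N1, hN1⟩ := eventually_le_max (fun k => prio (w k)) d P hfd hPmax
  obtain ⟨N2, hN2⟩ := eventually_le_max g (2 * rn n + 1) p hgle hpmax
  have hNf : ∀ k, max N1 N2 ≤ k → prio (w k) ≤ P :=
    fun k hk => hN1 k (le_trans (le_max_left _ _) hk)
  have hNg : ∀ k, max N1 N2 ≤ k → g k ≤ m + m := by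
    intro k hk
    have := hN2 k (le_trans (le_max_right _ _) hk)
    omega
  have hb_of_g : ∀ k, g k = m + m → rd.b k = true ∧ rd.j k = m := by
    intro k hk
    cases hbb : rd.b k with
    | true => have := (hgdef k).1 hbb; exact ⟨rfl, by omega⟩
    | false => have := (hgdef k).2 hbb; omega
  -- infinitely many even resets of register m with value above P
  have hC1 : ∀ K, ∃ t, K ≤ t ∧ (max N1 N2 ≤ t ∧ g t = m + m ∧
      P < (update (prio (w t)) (rd.s t)).getD (m-1) 0) := by
    intro K
    obtain ⟨i, hiK, hfi⟩ := hPinf (max K (max N1 N2))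
    have hiN : max N1 N2 ≤ i := le_trans (le_max_right _ _) hiK
    have hfi' : prio (w i) = P := hfi
    obtain ⟨t1, ht1i, hgt1⟩ := hpinf i
    have hex : ∃ δ, g (i + δ) = m + m := ⟨t1 - i, by
      rw [Nat.add_sub_cancel' ht1i, hgt1]; omega⟩
    have hgδ0 : g (i + Nat.find hex) = m + m := Nat.find_spec hex
    have hmin : ∀ δ, δ < Nat.find hex → g (i + δ) ≠ m + m := fun δ hδ => Nat.find_min hex hδ
    have hjlt : ∀ δ, δ < Nat.find hex → rd.j (i + δ) < m := by
      intro δ hδ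
      have hle := hNg (i + δ) (by omega)
      have hne := hmin δ hδ
      cases hbb : rd.b (i + δ) with
      | true => have := (hgdef (i+δ)).1 hbb; omega
      | false => have := (hgdef (i+δ)).2 hbb; omega
    have key : ∀ δ, δ ≤ Nat.find hex → 1 ≤ δ → P ≤ (rd.s (i + δ)).getD (m-1) 0 := by
      intro δ
      induction δ with
      | zero => intro _ h; omega
      | succ δ ih =>
        intro hle _
        have hstep := val_step rd m (i + δ) hm1 hmrn (hjlt δ (by omega))
        have hadd : i + (δ + 1) = (i + δ) + 1 := by omega
        rcases Nat.eq_zero_or_pos δ with rfl | hδp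
        · have h2 := le_trans (le_max_left _ _) hstep
          rw [hadd]
          have h3 : prio (w (i + 0)) = P := hfi'
          rw [← h3]
          simpa using h2
        · rw [hadd]
          exact le_trans (ih (by omega) hδp) (le_trans (le_max_right _ _) hstep)
    have hval_large : P ≤ max (prio (w (i + Nat.find hex)))
        ((rd.s (i + Nat.find hex)).getD (m-1) 0) := by
      rcases Nat.eq_zero_or_pos (Nat.find hex) with h0 | h0
      · rw [h0]
        have h3 : prio (w (i + 0)) = P := hfi'
        rw [← h3]
        exact le_max_left _ _
      · exact le_trans (key (Nat.find hex) le_rfl h0) (le_max_right _ _)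
    refine ⟨i + Nat.find hex, by omega, by omega, hgδ0, ?_⟩
    obtain ⟨hlen, hsort, _⟩ := rd.inv (i + Nat.find hex)
    have hxval : (update (prio (w (i + Nat.find hex))) (rd.s (i + Nat.find hex))).getD (m-1) 0 =
        max (prio (w (i + Nat.find hex))) ((rd.s (i + Nat.find hex)).getD (m-1) 0) :=
      getD_update _ _ hsort _ (by omega)
    rw [hxval]
    obtain ⟨hbt, hjm⟩ := hb_of_g _ hgδ0
    obtain ⟨_, hEv, _, _⟩ := rd.heven _ hbt
    rw [hjm] at hEv
    have hEv' : Even ((update (prio (w (i + Nat.find hex)))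
        (rd.s (i + Nat.find hex))).getD (m-1) 0) := hEv
    rw [hxval] at hEv'
    rw [Nat.even_iff] at hEv'
    rw [Nat.odd_iff] at hPev
    rcases lt_or_eq_of_le hval_large with h | h
    · exact h
    · exfalso
      rw [← h] at hEv'
      omega
  -- descend on the number of large registers in the block below m
  refine descent (fun k => List.countP (fun y => decide (P < y)) ((rd.s k).take m))
    (fun k => max N1 N2 ≤ k ∧ g k = m + m ∧
      P < (update (prio (w k)) (rd.s k)).getD (m-1) 0) (max N1 N2) ?_ ?_ hC1
  · intro k hk
    show List.countP _ ((rd.s (k+1)).take m) ≤ List.countP _ ((rd.s k).take m)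
    have hjm : rd.j k ≤ m := by
      have hle := hNg k hk
      cases hbb : rd.b k with
      | true => have := (hgdef k).1 hbb; omega
      | false => have := (hgdef k).2 hbb; omega
    exact (cnt_step rd P m k hP1 hmrn (hNf k hk) hjm).1
  · intro k hk hS
    show List.countP _ ((rd.s (k+1)).take m) < List.countP _ ((rd.s k).take m)
    obtain ⟨_, hgk, hx⟩ := hS
    obtain ⟨hbt, hjm⟩ := hb_of_g k hgk
    exact (cnt_step rd P m k hP1 hmrn (hNf k hk) (le_of_eq hjm)).2 hbt hjm hx

end Part1
section Part2

lemma psi_dec (n u R : ℕ) (hn : 1 ≤ n) (huR : u < R) (c : List ℕ) (hgt : 1 < c.getD u 0) :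
    (∑ i ∈ Finset.range R, ((bumpDec n u c).getD i 0 - 1) * n ^ i) + 1 ≤
      ∑ i ∈ Finset.range R, (c.getD i 0 - 1) * n ^ i := by
  rw [sum_split (fun i => ((bumpDec n u c).getD i 0 - 1) * n ^ i) u R huR,
      sum_split (fun i => (c.getD i 0 - 1) * n ^ i) u R huR]
  have h1 : ∑ i ∈ Finset.range u, ((bumpDec n u c).getD i 0 - 1) * n ^ i =
      ∑ i ∈ Finset.range u, (n - 1) * n ^ i :=
    Finset.sum_congr rfl (fun i hi => by
      rw [getD_bumpDec_lt n u c (Finset.mem_range.mp hi)])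
  have h2 : ∑ i ∈ Finset.Ico (u+1) R, ((bumpDec n u c).getD i 0 - 1) * n ^ i =
      ∑ i ∈ Finset.Ico (u+1) R, (c.getD i 0 - 1) * n ^ i :=
    Finset.sum_congr rfl (fun i hi => by
      rw [getD_bumpDec_gt n u c (by have := (Finset.mem_Ico.mp hi).1; omega)])
  rw [h1, h2, getD_bumpDec_eq]
  have hgeo := geo_sum n hn u
  have hce : (c.getD u 0 - 1 - 1) * n ^ u + n ^ u = (c.getD u 0 - 1) * n ^ u := by
    have he : c.getD u 0 - 1 - 1 + 1 = c.getD u 0 - 1 := by omega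
    calc (c.getD u 0 - 1 - 1) * n ^ u + n ^ u = (c.getD u 0 - 1 - 1 + 1) * n ^ u := by ring
      _ = (c.getD u 0 - 1) * n ^ u := by rw [he]
  omega

lemma psi_keep (n u R : ℕ) (hn : 1 ≤ n) (huR : u < R) (c : List ℕ) :
    (∑ i ∈ Finset.range R, ((bumpKeep n u c).getD i 0 - 1) * n ^ i) + 1 ≤
      n ^ u + ∑ i ∈ Finset.range R, (c.getD i 0 - 1) * n ^ i := by
  rw [sum_split (fun i => ((bumpKeep n u c).getD i 0 - 1) * n ^ i) u R huR,
      sum_split (fun i => (c.getD i 0 - 1) * n ^ i) u R huR]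
  have h1 : ∑ i ∈ Finset.range u, ((bumpKeep n u c).getD i 0 - 1) * n ^ i =
      ∑ i ∈ Finset.range u, (n - 1) * n ^ i :=
    Finset.sum_congr rfl (fun i hi => by
      rw [getD_bumpKeep_lt n u c (Finset.mem_range.mp hi)])
  have h2 : ∑ i ∈ Finset.Ico (u+1) R, ((bumpKeep n u c).getD i 0 - 1) * n ^ i =
      ∑ i ∈ Finset.Ico (u+1) R, (c.getD i 0 - 1) * n ^ i :=
    Finset.sum_congr rfl (fun i hi => by
      rw [getD_bumpKeep_ge n u c (by have := (Finset.mem_Ico.mp hi).1; omega)])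
  rw [h1, h2, getD_bumpKeep_ge n u c (le_refl u)]
  have hgeo := geo_sum n hn u
  omega

lemma psi_bound (n R : ℕ) (hn : 1 ≤ n) (c : List ℕ) (hcb : ∀ i, c.getD i 0 ≤ n) :
    (∑ i ∈ Finset.range R, (c.getD i 0 - 1) * n ^ i) + 1 ≤ n ^ R := by
  have h1 : ∑ i ∈ Finset.range R, (c.getD i 0 - 1) * n ^ i ≤
      ∑ i ∈ Finset.range R, (n - 1) * n ^ i :=
    Finset.sum_le_sum (fun i _ => Nat.mul_le_mul_right _ (by have := hcb i; omega))
  have hgeo := geo_sum n hn R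
  omega

/-- Counter values stay at most `n`. -/
lemma counter_bound {n d : ℕ} {w : Word} (rd : RunData n d w) (hn : 1 ≤ n) :
    ∀ k i, (rd.c k).getD i 0 ≤ n := by
  intro k
  induction k with
  | zero => intro i; rw [rd.hc0]; exact getD_replicate_le n _ i
  | succ k ih =>
    intro i
    cases hb : rd.b k with
    | true =>
      obtain ⟨_, _, _, hc'⟩ := rd.heven k hb
      rw [hc']
      rcases Nat.lt_or_ge i (rd.j k) with h | h
      · rw [getD_bumpKeep_lt n _ _ h]
      · rw [getD_bumpKeep_ge n _ _ h]; exact ih i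
    | false =>
      obtain ⟨_, hc', _⟩ := rd.hodd k hb
      rw [hc']
      rcases lt_trichotomy i (rd.j k) with h | h | h
      · rw [getD_bumpDec_lt n _ _ h]
      · rw [h, getD_bumpDec_eq]; have := ih (rd.j k); omega
      · rw [getD_bumpDec_gt n _ _ h]; exact ih i

/-- The potential strictly decreases on letters of priority 1. -/
lemma phi_step {n d : ℕ} {w : Word} (rd : RunData n d w) (hn : 1 ≤ n) (k : ℕ)
    (hp : prio (w k) = 1) :
    n ^ (rn n + 1) * List.countP (fun y => decide (Even y)) (rd.s (k+1)) +
      (∑ i ∈ Finset.range (rn n + 1), ((rd.c (k+1)).getD i 0 - 1) * n ^ i) + 1 ≤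
    n ^ (rn n + 1) * List.countP (fun y => decide (Even y)) (rd.s k) +
      (∑ i ∈ Finset.range (rn n + 1), ((rd.c k).getD i 0 - 1) * n ^ i) := by
  obtain ⟨hlen, hsort, hone⟩ := rd.inv k
  have hupd : update (prio (w k)) (rd.s k) = rd.s k := by
    rw [hp]; exact update_one _ hone
  have hjR : rd.j k < rn n + 1 := by have := rd.hjle k; omega
  cases hb : rd.b k with
  | true =>
    obtain ⟨hj1, hEv, hs', hc'⟩ := rd.heven k hb
    rw [hupd] at hEv hs'
    -- the even-register count decreases by 1
    have hecnt : List.countP (fun y => decide (Even y)) (rd.s (k+1)) + 1 =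
        List.countP (fun y => decide (Even y)) (rd.s k) := by
      rw [hs']
      unfold resetReg
      rw [List.countP_cons]
      rw [if_neg (by decide)]
      have h2 := countP_eraseIdx (fun y => decide (Even y)) (rd.s k) (rd.j k - 1)
        (by have := rd.hjle k; omega)
      rw [if_pos (by simp only [decide_eq_true_eq]; exact hEv)] at h2
      omega
    have hpsi := psi_keep n (rd.j k) (rn n + 1) hn hjR (rd.c k)
    rw [← hc'] at hpsi
    have hA : n ^ rd.j k ≤ n ^ (rn n + 1) := Nat.pow_le_pow_right hn (by omega)
    have hmul : n ^ (rn n + 1) * (List.countP (fun y => decide (Even y)) (rd.s (k+1)) + 1) =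
        n ^ (rn n + 1) * List.countP (fun y => decide (Even y)) (rd.s k) := by rw [hecnt]
    rw [Nat.mul_add, Nat.mul_one] at hmul
    omega
  | false =>
    obtain ⟨hgt, hc', hcase⟩ := rd.hodd k hb
    have hpsi := psi_dec n (rd.j k) (rn n + 1) hn hjR (rd.c k) hgt
    rw [← hc'] at hpsi
    rcases hcase with ⟨_, hs'⟩ | ⟨hj1, hOdd, hs'⟩
    · rw [hupd] at hs'
      rw [hs']
      omega
    · rw [hupd] at hOdd hs'
      have hecnt : List.countP (fun y => decide (Even y)) (rd.s (k+1)) =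
          List.countP (fun y => decide (Even y)) (rd.s k) := by
        rw [hs']
        unfold resetReg
        rw [List.countP_cons]
        rw [if_neg (by decide)]
        have h2 := countP_eraseIdx (fun y => decide (Even y)) (rd.s k) (rd.j k - 1)
          (by have := rd.hjle k; omega)
        rw [if_neg (by simp only [decide_eq_true_eq]; exact Nat.not_even_iff_odd.mpr hOdd)] at h2
        omega
      rw [hecnt]
      omega

/-- The witness word: priority 2 on perfect squares, priority 1 elsewhere. -/
def wit : Word := fun k => (1, if Nat.sqrt k * Nat.sqrt k = k then 2 else 1, 1)

lemma wit_prio (k : ℕ) : prio (wit k) = if Nat.sqrt k * Nat.sqrt k = k then 2 else 1 := rfl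

lemma wit_prio_one {a k : ℕ} (h1 : a * a < k) (h2 : k < (a+1) * (a+1)) : prio (wit k) = 1 := by
  rw [wit_prio, if_neg]
  intro h
  have hle : a ≤ Nat.sqrt k := Nat.le_sqrt.mpr (le_of_lt h1)
  have hlt : Nat.sqrt k < a + 1 := Nat.sqrt_lt.mpr h2
  have he : Nat.sqrt k = a := by omega
  rw [he] at h
  omega

lemma wit_inAlph (n d : ℕ) (hn : 1 ≤ n) (hd : 2 ≤ d) : ∀ k, InAlph n d (wit k) := by
  intro k
  refine ⟨le_rfl, hn, ?_, ?_, le_rfl, hn⟩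
  · show 1 ≤ (if Nat.sqrt k * Nat.sqrt k = k then 2 else 1)
    split <;> omega
  · show (if Nat.sqrt k * Nat.sqrt k = k then 2 else 1) ≤ d
    split <;> omega

lemma wit_limsupEven : LimsupEven wit := by
  refine ⟨2, ⟨1, rfl⟩, ?_, ?_⟩
  · intro N
    have h1 : N ≤ N * N := by nlinarith
    refine ⟨N * N, h1, ?_⟩
    show prio (wit (N * N)) = 2
    rw [wit_prio, if_pos (by rw [Nat.sqrt_eq])]
  · intro q hq
    obtain ⟨k, _, hk⟩ := hq 0
    have : prio (wit k) = q := hk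
    rw [wit_prio] at this
    split at this <;> omega

lemma wit_reject (n d : ℕ) (hn : 1 ≤ n) : wit ∉ Lang (Saut n d) := by
  intro hw
  obtain ⟨rd⟩ := run_extract hw
  set A := n ^ (rn n + 1) with hA
  have hA1 : 1 ≤ A := Nat.one_le_pow _ _ (by omega)
  set Φ : ℕ → ℕ := fun k => A * List.countP (fun y => decide (Even y)) (rd.s k) +
    ∑ i ∈ Finset.range (rn n + 1), ((rd.c k).getD i 0 - 1) * n ^ i with hΦ
  have hbound : ∀ k, Φ k + 1 ≤ A * rn n + A := by
    intro k
    have hec : List.countP (fun y => decide (Even y)) (rd.s k) ≤ rn n := by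
      have h1 := List.countP_le_length (p := fun y => decide (Even y)) (l := rd.s k)
      rw [(rd.inv k).1] at h1
      exact h1
    have hpsi := psi_bound n (rn n + 1) hn (rd.c k) (counter_bound rd hn k)
    have hmul : A * List.countP (fun y => decide (Even y)) (rd.s k) ≤ A * rn n :=
      Nat.mul_le_mul_left _ hec
    show A * List.countP (fun y => decide (Even y)) (rd.s k) +
      (∑ i ∈ Finset.range (rn n + 1), ((rd.c k).getD i 0 - 1) * n ^ i) + 1 ≤ A * rn n + A
    omega
  set a := A * rn n + A with ha
  have ha1 : 1 ≤ a := by omega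
  have hblock : ∀ i, i ≤ 2 * a → Φ (a * a + 1 + i) + i ≤ Φ (a * a + 1) := by
    intro i
    induction i with
    | zero => intro _; simp
    | succ i ih =>
      intro hle
      have hk1 : a * a < a * a + 1 + i := by omega
      have hk2 : a * a + 1 + i < (a + 1) * (a + 1) := by nlinarith
      have hp := wit_prio_one hk1 hk2
      have hstep := phi_step rd hn (a * a + 1 + i) hp
      have hΦs : Φ (a * a + 1 + i + 1) + 1 ≤ Φ (a * a + 1 + i) := hstep
      have hih := ih (by omega)
      have hadd : a * a + 1 + (i + 1) = (a * a + 1 + i) + 1 := by omega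
      rw [hadd]
      omega
  have hfin := hblock (2 * a) le_rfl
  have hb2 := hbound (a * a + 1)
  omega

end Part2
/-- For even `d ≥ 2`, `L(S_{n,d})` is a proper subset of
`LimsupEven_{n,d}`. -/
theorem Saut_lang_ssubset (n d : ℕ) (hn : 1 ≤ n) (hde : Even d) (hd : 2 ≤ d) :
    (∀ w ∈ Lang (Saut n d), LimsupEven w) ∧
    ∃ w : Word, (∀ k, InAlph n d (w k)) ∧ LimsupEven w ∧ w ∉ Lang (Saut n d) := by
  exact ⟨fun w hw => part1 w hw, wit, wit_inAlph n d hn hd, wit_limsupEven, wit_reject n d hn⟩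

end PGSep
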